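/- Suppose that C₁ and C₂ are two nonempty sets of circular partitions of X and that C₂ is compatible. Then for each circular partition σ₁ ∈ C₁ there exists at most one circular partition σ₂ ∈ C₂ with σ₁ ≼ σ₂. Moreover, C₁ ⊴ C₂ holds if and only if there exists a unique domination map from C₁ to C₂. -/

import Mathlib

noncomputable section

namespace PhyloCactus

/-- A list of sets is a (linear ordering of a) partition of `X`: at least two parts,
no repeated parts, all parts nonempty, and every element of `X` lies in exactly one part. -/
def IsPartList (X : Type) (l : List (Set X)) : Prop :=
  2 ≤ l.length ∧ l.Nodup ∧ (∀ A ∈ l, A.Nonempty) ∧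
    ∀ x : X, ∃! A : Set X, A ∈ l ∧ x ∈ A

/-- One step of circular re-ordering of a list: a cyclic rotation or a reversal. -/
def CircStep (X : Type) (l l' : List (Set X)) : Prop :=
  l' = l.rotate 1 ∨ l' = l.reverse

/-- Linear orderings of partitions of `X`. -/
abbrev PartList (X : Type) := {l : List (Set X) // IsPartList X l}

/-- Two linear orderings are circularly equivalent if they are related by the
equivalence relation generated by rotations and reversals. -/
def circSetoid (X : Type) : Setoid (PartList X) where
  r a b := Relation.EqvGen (CircStep X) a.1 b.1
  iseqv := ⟨fun _ => Relation.EqvGen.refl _, fun h => Relation.EqvGen.symm _ _ h,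
    fun h h' => Relation.EqvGen.trans _ _ _ h h'⟩

/-- A circular partition of `X`: a partition together with a circular ordering of
its parts, i.e. an equivalence class of linear orderings of partitions of `X`
under cyclic rotation and reversal. -/
def CircPart (X : Type) := Quotient (circSetoid X)

/-- The circular partition determined by a linear ordering of a partition. -/
def CircPart.mk {X : Type} (l : PartList X) : CircPart X :=
  Quotient.mk (circSetoid X) l

/-- The set of parts of a circular partition. -/
def CircPart.parts {X : Type} (σ : CircPart X) : Set (Set X) :=
  {A | ∃ l : PartList X, σ = CircPart.mk l ∧ A ∈ l.1}

/-- The number of parts of a circular partition. -/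
def CircPart.numParts {X : Type} (σ : CircPart X) : ℕ := σ.parts.ncard

/-- A circular partition is a split if it has exactly two parts. -/
def CircPart.IsSplit {X : Type} (σ : CircPart X) : Prop :=
  ∃ l : PartList X, σ = CircPart.mk l ∧ l.1.length = 2

/-- A partition of `X`, as a set of parts. -/
def IsPartition (X : Type) (π : Set (Set X)) : Prop :=
  2 ≤ π.ncard ∧ (∀ A ∈ π, A.Nonempty) ∧ ∀ x : X, ∃! A : Set X, A ∈ π ∧ x ∈ A

/-- Two partitions of `X` are compatible if some part of the first and some part
of the second have union `X`. -/
def PartCompatible {X : Type} (π π' : Set (Set X)) : Prop :=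
  ∃ A ∈ π, ∃ B ∈ π', A ∪ B = (Set.univ : Set X)

/-- A collection of partitions is compatible if any two distinct members are compatible. -/
def PartFamilyCompatible {X : Type} (Ps : Set (Set (Set X))) : Prop :=
  ∀ π ∈ Ps, ∀ π' ∈ Ps, π ≠ π' → PartCompatible π π'

/-- Two circular partitions are compatible if their underlying partitions are. -/
def CircPart.Compatible {X : Type} (σ σ' : CircPart X) : Prop :=
  PartCompatible σ.parts σ'.parts

/-- A set of circular partitions is compatible if any two distinct members are compatible. -/
def CompatibleFamily {X : Type} (C : Set (CircPart X)) : Prop :=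
  ∀ σ ∈ C, ∀ τ ∈ C, σ ≠ τ → σ.Compatible τ

/-- `MergeStep σ σ'` holds if `σ'` is obtained from `σ` by merging two parts that are
adjacent in the circular ordering of `σ` into a single part. -/
def MergeStep {X : Type} (σ σ' : CircPart X) : Prop :=
  ∃ (A B : Set X) (t : List (Set X)) (h : IsPartList X (A :: B :: t))
    (h' : IsPartList X ((A ∪ B) :: t)),
    σ = CircPart.mk ⟨A :: B :: t, h⟩ ∧ σ' = CircPart.mk ⟨(A ∪ B) :: t, h'⟩

/-- `σ ≼ τ`: either `σ = τ`, or `σ` is proper and `σ` is obtained from `τ` by a finite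
sequence of merges. -/
def CircPart.Preceq {X : Type} (σ τ : CircPart X) : Prop :=
  σ = τ ∨ (¬ σ.IsSplit ∧ Relation.ReflTransGen MergeStep τ σ)

/-- A domination map from `C` to `C'`: an injective map with `σ ≼ L σ` for all `σ ∈ C`. -/
def IsDominationMap {X : Type} (C C' : Set (CircPart X))
    (L : CircPart X → CircPart X) : Prop :=
  Set.MapsTo L C C' ∧ Set.InjOn L C ∧ ∀ σ ∈ C, CircPart.Preceq σ (L σ)

/-- `C` is dominated by `C'` if there is a domination map from `C` to `C'`. -/
def Dominates {X : Type} (C C' : Set (CircPart X)) : Prop :=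
  ∃ L, IsDominationMap C C' L

end PhyloCactus

namespace PhyloCactus

/-- A graph is a cactus if any two distinct cycles share at most one vertex. -/
def IsCactus {V : Type} (G : SimpleGraph V) : Prop :=
  ∀ ⦃u v : V⦄ (c : G.Walk u u) (c' : G.Walk v v), c.IsCycle → c'.IsCycle →
    {e | e ∈ c.edges} ≠ {e | e ∈ c'.edges} →
    Set.Subsingleton {w | w ∈ c.support ∧ w ∈ c'.support}

/-- An `X`-cactus: a finite connected cactus together with a labelling map
`φ : X → V` whose image contains every vertex of degree at most two. -/
structure XCactus (X : Type) where
  V : Type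
  fintypeV : Fintype V
  G : SimpleGraph V
  connected : G.Connected
  cactus : IsCactus G
  φ : X → V
  labels : ∀ v : V, (G.neighborSet v).ncard ≤ 2 → v ∈ Set.range φ

namespace XCactus

variable {X : Type}

/-- The trivial `X`-cactus consists of a single vertex. -/
def IsTrivial (N : XCactus X) : Prop := ∀ u v : N.V, u = v

/-- The labels reachable from `w` after deleting the edge set `s`. -/
def compPart (N : XCactus X) (s : Set (Sym2 N.V)) (w : N.V) : Set X :=
  {x : X | (N.G.deleteEdges s).Reachable w (N.φ x)}

/-- The list of label-classes of the connected components met along `vs`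
after deleting the edge set `s`. -/
def blockList (N : XCactus X) (s : Set (Sym2 N.V)) (vs : List N.V) : List (Set X) :=
  vs.map (N.compPart s)

/-- The set `C(N)` of circular partitions of `X` induced by the blocks of `N`:
each cut edge induces a split and each cycle induces a circular partition, whose
circular order is given by the cyclic order of the vertices on the cycle. -/
def circSet (N : XCactus X) : Set (CircPart X) :=
  {σ | ∃ l : PartList X, σ = CircPart.mk l ∧
    ((∃ u v : N.V, N.G.IsBridge s(u, v) ∧ l.1 = N.blockList {s(u, v)} [u, v]) ∨
      (∃ (v : N.V) (c : N.G.Walk v v), c.IsCycle ∧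
        l.1 = N.blockList {e | e ∈ c.edges} c.support.tail))}

/-- The set `C_b(N)` of splits of `N`. -/
def splitSet (N : XCactus X) : Set (CircPart X) := {σ ∈ N.circSet | σ.IsSplit}

/-- The set `C_p(N)` of proper circular partitions of `N`. -/
def properSet (N : XCactus X) : Set (CircPart X) := {σ ∈ N.circSet | ¬ σ.IsSplit}

/-- Isomorphism of `X`-cactuses: a graph isomorphism commuting with the labelling maps. -/
def Isom (N N' : XCactus X) : Prop :=
  ∃ f : N.V ≃ N'.V, (∀ u v : N.V, N.G.Adj u v ↔ N'.G.Adj (f u) (f v)) ∧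
    ∀ x : X, f (N.φ x) = N'.φ x

theorem isom_refl (N : XCactus X) : N.Isom N :=
  ⟨Equiv.refl _, fun _ _ => Iff.rfl, fun _ => rfl⟩

theorem isom_symm {N N' : XCactus X} (h : N.Isom N') : N'.Isom N := by
  obtain ⟨f, hadj, hphi⟩ := h
  refine ⟨f.symm, fun u v => ?_, fun x => ?_⟩
  · simpa using (hadj (f.symm u) (f.symm v)).symm
  · rw [← hphi x]; simp

theorem isom_trans {a b c : XCactus X} (h1 : a.Isom b) (h2 : b.Isom c) : a.Isom c := by
  obtain ⟨f, hadj, hphi⟩ := h1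
  obtain ⟨g, hadj', hphi'⟩ := h2
  exact ⟨f.trans g, fun u v => (hadj u v).trans (hadj' (f u) (f v)),
    fun x => by simp [Equiv.trans_apply, hphi, hphi']⟩

/-- The degree of a vertex. -/
def deg (N : XCactus X) (v : N.V) : ℕ := (N.G.neighborSet v).ncard

/-- A leaf is a vertex of degree one. -/
def IsLeaf (N : XCactus X) (v : N.V) : Prop := N.deg v = 1

/-- A phylogenetic `X`-cactus: the labelling map is a bijection onto the leaves. -/
def Phylogenetic (N : XCactus X) : Prop :=
  Function.Injective N.φ ∧ Set.range N.φ = {v : N.V | N.IsLeaf v}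

/-- A binary `X`-cactus: every internal vertex has degree three. -/
def Binary (N : XCactus X) : Prop := ∀ v : N.V, ¬ N.IsLeaf v → N.deg v = 3

/-- A vertex is contained in some cycle. -/
def InCycle (N : XCactus X) (v : N.V) : Prop :=
  ∃ (w : N.V) (c : N.G.Walk w w), c.IsCycle ∧ v ∈ c.support

/-- A vertex is contained in some tiny cycle (a cycle with exactly three vertices). -/
def InTinyCycle (N : XCactus X) (v : N.V) : Prop :=
  ∃ (w : N.V) (c : N.G.Walk w w), c.IsCycle ∧ c.length = 3 ∧ v ∈ c.support

/-- An `X`-tree is an `X`-cactus whose underlying graph is a tree (i.e. acyclic). -/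
def IsXTree (N : XCactus X) : Prop := N.G.IsAcyclic

end XCactus

/-- The rank of an `X`-cactus: `ρ(N) = Σ_{σ ∈ C(N)} max 1 (|σ| - 2)`
(`ρ(N) = 0` for the trivial `X`-cactus, whose `C(N)` is empty). -/
def rho {X : Type} (N : XCactus X) : ℤ :=
  ∑ᶠ σ ∈ N.circSet, max 1 ((σ.numParts : ℤ) - 2)

end PhyloCactus

namespace PhyloCactus

variable {X : Type}

/-- `X`-cactuses up to isomorphism. -/
def xcactusSetoid (X : Type) : Setoid (XCactus X) where
  r := XCactus.Isom
  iseqv := ⟨XCactus.isom_refl, XCactus.isom_symm, XCactus.isom_trans⟩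

/-- `G(X)`: the set of `X`-cactuses up to isomorphism. -/
def GX (X : Type) := Quotient (xcactusSetoid X)

/-- The isomorphism class of an `X`-cactus. -/
def GX.mk (N : XCactus X) : GX X := Quotient.mk (xcactusSetoid X) N

/-- `f : N.V → N'.V` realises `N'` as the result of collapsing the set `S` of
vertices of `N` to a single vertex (keeping all adjacencies between distinct
images, and relabelling by composition). -/
def ContractionMapSpec (N N' : XCactus X) (S : Set N.V) (f : N.V → N'.V) : Prop :=
  Function.Surjective f ∧
  (∀ a b : N.V, f a = f b ↔ (a = b ∨ (a ∈ S ∧ b ∈ S))) ∧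
  (∀ a b : N.V, N'.G.Adj (f a) (f b) ↔
    (f a ≠ f b ∧ ∃ a' b' : N.V, f a' = f a ∧ f b' = f b ∧ N.G.Adj a' b')) ∧
  (∀ x : X, N'.φ x = f (N.φ x))

/-- `N'` is obtained from `N` by contracting an edge `{u, v}` that is not
contained in a tiny cycle (equivalently, `u` and `v` have no common neighbour):
`u` and `v` are identified and the new vertex is labelled by
`φ⁻¹(u) ∪ φ⁻¹(v)`. -/
def IsEdgeContraction (N N' : XCactus X) : Prop :=
  ∃ (u v : N.V) (f : N.V → N'.V), N.G.Adj u v ∧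
    (¬ ∃ w : N.V, N.G.Adj u w ∧ N.G.Adj v w) ∧
    ContractionMapSpec N N' {u, v} f

/-- `N'` is obtained from `N` by a triple contraction of a tiny cycle
`v₁, v₂, v₃`: the cycle is collapsed to a single vertex, labelled by the union
of the labels of `v₁, v₂, v₃`, adjacent to exactly the former outside
neighbours of the cycle. -/
def IsTripleContraction (N N' : XCactus X) : Prop :=
  ∃ (v₁ v₂ v₃ : N.V) (f : N.V → N'.V),
    N.G.Adj v₁ v₂ ∧ N.G.Adj v₂ v₃ ∧ N.G.Adj v₁ v₃ ∧
    ContractionMapSpec N N' {v₁, v₂, v₃} f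

/-- A contraction is an edge contraction or a triple contraction. -/
def IsContraction (N N' : XCactus X) : Prop :=
  IsEdgeContraction N N' ∨ IsTripleContraction N N'

/-- One contraction step on isomorphism classes of `X`-cactuses. -/
def GStep (a b : GX X) : Prop :=
  ∃ N N' : XCactus X, a = GX.mk N ∧ b = GX.mk N' ∧ IsContraction N N'

/-- The order on `G(X)`: `a ≤ b` iff there is a (possibly empty) sequence of
contractions transforming `b` into `a`. -/
def GLe (a b : GX X) : Prop := Relation.ReflTransGen GStep b a

/-- The associated strict order on `G(X)`. -/
def GLt (a b : GX X) : Prop := GLe a b ∧ a ≠ b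

/-- One edge-contraction step between (classes of) `X`-trees. -/
def TStep (a b : GX X) : Prop :=
  ∃ N N' : XCactus X, XCactus.IsXTree N ∧ XCactus.IsXTree N' ∧
    a = GX.mk N ∧ b = GX.mk N' ∧ IsEdgeContraction N N'

/-- The order on `T(X)`: `a ≤ b` iff `a` is obtained from `b` by a (possibly
empty) sequence of edge contractions of `X`-trees. -/
def TLe (a b : GX X) : Prop := Relation.ReflTransGen TStep b a

end PhyloCactus

namespace PhyloCactus

/-- A semi-labelled `X`-tree: a finite tree together with a map `ψ : X → V`
whose image contains every leaf. -/
structure SemiTree (X : Type) where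
  V : Type
  fintypeV : Fintype V
  G : SimpleGraph V
  isTree : G.IsTree
  ψ : X → V
  leaves : ∀ v : V, (G.neighborSet v).ncard = 1 → v ∈ Set.range ψ

namespace SemiTree

variable {X : Type}

/-- The partition `π(v)` of `X` induced by deleting the vertex `v`: its parts
are the label sets of the connected components of `T - v`. -/
def vertexPart (T : SemiTree X) (v : T.V) : Set (Set X) :=
  {P | ∃ w : T.V, w ≠ v ∧
    P = {x : X | (T.G.deleteEdges {e | v ∈ e}).Reachable w (T.ψ x)}}

/-- The split `π(e)` of `X` induced by deleting the edge `e`: its parts are the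
label sets of the connected components of `T - e`. -/
def edgePart (T : SemiTree X) (e : Sym2 T.V) : Set (Set X) :=
  {P | ∃ w : T.V, P = {x : X | (T.G.deleteEdges {e}).Reachable w (T.ψ x)}}

end SemiTree

/-- A semi-tree representation of a collection `Ps` of partitions of `X`:
a semi-labelled `X`-tree together with a map `κ` assigning to each `π ∈ Ps`
either an unlabelled vertex of degree at least three inducing `π`, or an edge
inducing `π`. -/
structure SemiTreeRep (X : Type) (Ps : Set (Set (Set X))) where
  T : SemiTree X
  κ : Set (Set X) → T.V ⊕ Sym2 T.V
  spec : ∀ π ∈ Ps,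
    (∃ v : T.V, κ π = Sum.inl v ∧ v ∉ Set.range T.ψ ∧
      3 ≤ (T.G.neighborSet v).ncard ∧ T.vertexPart v = π) ∨
    (∃ e : Sym2 T.V, κ π = Sum.inr e ∧ e ∈ T.G.edgeSet ∧ T.edgePart e = π)

namespace SemiTreeRep

variable {X : Type} {Ps : Set (Set (Set X))}

/-- `h(e, κ)`: the number of partitions `π ∈ Ps` with `κ(π)` equal to `e` or to
one of its endpoints. -/
def h (R : SemiTreeRep X Ps) (e : Sym2 R.T.V) : ℕ :=
  {π ∈ Ps | (∃ v, v ∈ e ∧ R.κ π = Sum.inl v) ∨ R.κ π = Sum.inr e}.ncard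

/-- A perfect semi-tree representation: `h(e, κ) = 1` for every edge, and `κ(π)`
is an edge exactly when `π` is a split (a representation on the trivial
one-vertex tree is perfect by convention). -/
def Perfect (R : SemiTreeRep X Ps) : Prop :=
  (∀ u v : R.T.V, u = v) ∨
  ((∀ e ∈ R.T.G.edgeSet, R.h e = 1) ∧
    ∀ π ∈ Ps, ((∃ e, R.κ π = Sum.inr e) ↔ π.ncard = 2))

/-- Isomorphism of semi-tree representations. -/
def Isom (R R' : SemiTreeRep X Ps) : Prop :=
  ∃ f : R.T.V ≃ R'.T.V,
    (∀ u v : R.T.V, R.T.G.Adj u v ↔ R'.T.G.Adj (f u) (f v)) ∧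
    (∀ x : X, f (R.T.ψ x) = R'.T.ψ x) ∧
    ∀ π ∈ Ps, R'.κ π = Sum.map f (Sym2.map f) (R.κ π)

end SemiTreeRep

variable {X : Type}

/-- The edge set of the incompatibility graph `I(N₁, N₂)`: pairs of distinct
incompatible circular partitions of `C(N₁) ∪ C(N₂)`. -/
def IncompatEdges (N₁ N₂ : XCactus X) : Set (Sym2 (CircPart X)) :=
  {p | ∃ σ τ : CircPart X, p = s(σ, τ) ∧
    σ ∈ N₁.circSet ∪ N₂.circSet ∧ τ ∈ N₁.circSet ∪ N₂.circSet ∧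
    σ ≠ τ ∧ ¬ σ.Compatible τ}

/-- The set `W₀` of isolated vertices of the incompatibility graph `I(N₁, N₂)`. -/
def IsolatedVerts (N₁ N₂ : XCactus X) : Set (CircPart X) :=
  {σ ∈ N₁.circSet ∪ N₂.circSet |
    ∀ τ ∈ N₁.circSet ∪ N₂.circSet, τ ≠ σ → σ.Compatible τ}

/-- The incompatibility graph `I(N₁, N₂)` is a matching: every vertex has degree
at most one. -/
def IncompatIsMatching (N₁ N₂ : XCactus X) : Prop :=
  ∀ σ ∈ N₁.circSet ∪ N₂.circSet,
    Set.Subsingleton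
      {τ | τ ∈ N₁.circSet ∪ N₂.circSet ∧ τ ≠ σ ∧ ¬ σ.Compatible τ}

/-- A resolution of the incompatibility graph: an injective map on its edges
assigning to each edge an upper bound of its two endpoints in `(C(X), ≼)`. -/
def IsResolution (N₁ N₂ : XCactus X) (lam : Sym2 (CircPart X) → CircPart X) : Prop :=
  Set.InjOn lam (IncompatEdges N₁ N₂) ∧
  ∀ p ∈ IncompatEdges N₁ N₂, ∀ σ, σ ∈ p → CircPart.Preceq σ (lam p)

/-- A minimal resolution: each `lam p` is a least upper bound of the endpoints
of `p` in `(C(X), ≼)`, i.e. no upper bound of the endpoints is strictly below it. -/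
def IsMinimalResolution (N₁ N₂ : XCactus X)
    (lam : Sym2 (CircPart X) → CircPart X) : Prop :=
  IsResolution N₁ N₂ lam ∧
  ∀ p ∈ IncompatEdges N₁ N₂, ∀ μ : CircPart X,
    (∀ σ, σ ∈ p → CircPart.Preceq σ μ) →
    ¬ (CircPart.Preceq μ (lam p) ∧ μ ≠ lam p)

/-- The set of lower bounds in `(C(X), ≼)` of an `m`-tuple of circular partitions. -/
def TupleLowerBounds (m : ℕ) (μ : Fin m → CircPart X) : Set (CircPart X) :=
  {ν | ∀ i : Fin m, CircPart.Preceq ν (μ i)}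

/-- The set `glb(μ₁, …, μ_m)` of greatest lower bounds of an `m`-tuple in
`(C(X), ≼)`: lower bounds above which there is no strictly larger lower bound. -/
def TupleGlb (m : ℕ) (μ : Fin m → CircPart X) : Set (CircPart X) :=
  {ν ∈ TupleLowerBounds m μ |
    ∀ ν' ∈ TupleLowerBounds m μ, CircPart.Preceq ν ν' → ν' = ν}

/-- A feasible subset `Γ` of `C_p(N₁) × ⋯ × C_p(N_m)`: nonempty, every element
has a meet, and distinct elements differ in every coordinate. -/
def Feasible (m : ℕ) (Ns : Fin m → XCactus X)
    (Γ : Set (Fin m → CircPart X)) : Prop :=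
  Γ.Nonempty ∧ (∀ μ ∈ Γ, ∀ i : Fin m, μ i ∈ (Ns i).properSet) ∧
  (∀ μ ∈ Γ, (TupleGlb m μ).Nonempty) ∧
  (∀ μ ∈ Γ, ∀ μ' ∈ Γ, μ ≠ μ' → ∀ i : Fin m, μ i ≠ μ' i)

/-- A meet realization of a feasible set `Γ`: a set of circular partitions
containing exactly one greatest lower bound for each element of `Γ`, minimal
under inclusion with this property. -/
def MeetRealization (m : ℕ) (Γ : Set (Fin m → CircPart X))
    (C : Set (CircPart X)) : Prop :=
  (∀ μ ∈ Γ, ∃! ν, ν ∈ C ∧ ν ∈ TupleGlb m μ) ∧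
  ∀ C' ⊆ C, (∀ μ ∈ Γ, ∃! ν, ν ∈ C' ∧ ν ∈ TupleGlb m μ) → C' = C

end PhyloCactus

namespace PhyloCactus

section Aux

variable {X : Type}

lemma eqvGen_mem {a b : List (Set X)} (h : Relation.EqvGen (CircStep X) a b) (A : Set X) :
    A ∈ a ↔ A ∈ b := by
  induction h with
  | rel x y h => rcases h with rfl | rfl <;> simp [List.mem_rotate]
  | refl => rfl
  | symm _ _ _ ih => exact ih.symm
  | trans _ _ _ _ _ ih1 ih2 => exact ih1.trans ih2

lemma mem_parts {l : PartList X} {A : Set X} :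
    A ∈ (CircPart.mk l).parts ↔ A ∈ l.1 := by
  constructor
  · rintro ⟨l', heq, hm⟩
    exact (eqvGen_mem (Quotient.exact heq) A).mpr hm
  · intro h; exact ⟨l, rfl, h⟩

lemma circPart_exists_rep (σ : CircPart X) : ∃ l : PartList X, σ = CircPart.mk l := by
  obtain ⟨l, hl⟩ := Quot.exists_rep σ
  exact ⟨l, hl.symm⟩

lemma parts_existsUnique (σ : CircPart X) (x : X) :
    ∃! A : Set X, A ∈ σ.parts ∧ x ∈ A := by
  obtain ⟨l, rfl⟩ := circPart_exists_rep σ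
  obtain ⟨A, ⟨hA, hxA⟩, hu⟩ := l.2.2.2.2 x
  exact ⟨A, ⟨mem_parts.mpr hA, hxA⟩, fun B hB => hu B ⟨mem_parts.mp hB.1, hB.2⟩⟩

lemma parts_eq_of_inter {σ : CircPart X} {A B : Set X}
    (hA : A ∈ σ.parts) (hB : B ∈ σ.parts) (h : (A ∩ B).Nonempty) : A = B := by
  obtain ⟨x, hxA, hxB⟩ := h
  obtain ⟨C, _, hu⟩ := parts_existsUnique σ x
  rw [hu A ⟨hA, hxA⟩, hu B ⟨hB, hxB⟩]

lemma parts_nonempty {σ : CircPart X} {A : Set X} (hA : A ∈ σ.parts) : A.Nonempty := by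
  obtain ⟨l, rfl⟩ := circPart_exists_rep σ
  exact l.2.2.2.1 A (mem_parts.mp hA)

/-- `σ` refines `τ`: every part of `σ` meeting a part of `τ` is contained in it. -/
def Refines (σ τ : CircPart X) : Prop :=
  ∀ P ∈ τ.parts, ∀ Q ∈ σ.parts, (Q ∩ P).Nonempty → Q ⊆ P

lemma refines_refl (σ : CircPart X) : Refines σ σ :=
  fun P hP Q hQ h => (parts_eq_of_inter hQ hP h).subset

lemma refines_trans {σ τ ρ : CircPart X} (h1 : Refines σ τ) (h2 : Refines τ ρ) :
    Refines σ ρ := by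
  rintro P hP Q hQ ⟨x, hxQ, hxP⟩
  obtain ⟨R, ⟨hR, hxR⟩, -⟩ := parts_existsUnique τ x
  exact (h1 R hR Q hQ ⟨x, hxQ, hxR⟩).trans (h2 P hP R hR ⟨x, hxR, hxP⟩)

lemma mergeStep_refines {σ σ' : CircPart X} (h : MergeStep σ σ') : Refines σ σ' := by
  obtain ⟨A, B, t, h1, h2, rfl, rfl⟩ := h
  intro P hP Q hQ hne
  rw [mem_parts] at hP hQ
  have hmem : ∀ C : Set X, C ∈ A :: B :: t →
      C ∈ (CircPart.mk ⟨A :: B :: t, h1⟩).parts := fun C hC => mem_parts.mpr hC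
  rcases List.mem_cons.mp hP with rfl | hP
  · obtain ⟨x, hxQ, hxP⟩ := hne
    rcases hxP with hxA | hxB
    · have hQA : Q = A := parts_eq_of_inter (hmem Q hQ) (hmem A (by simp)) ⟨x, hxQ, hxA⟩
      exact hQA ▸ Set.subset_union_left
    · have hQB : Q = B := parts_eq_of_inter (hmem Q hQ) (hmem B (by simp)) ⟨x, hxQ, hxB⟩
      exact hQB ▸ Set.subset_union_right
  · exact (parts_eq_of_inter (hmem Q hQ) (hmem P (by simp [hP])) hne).subset

lemma rtg_refines {σ τ : CircPart X} (h : Relation.ReflTransGen MergeStep τ σ) :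
    Refines τ σ := by
  induction h with
  | refl => exact refines_refl _
  | tail _ hstep ih => exact refines_trans ih (mergeStep_refines hstep)

lemma preceq_refines {σ τ : CircPart X} (h : CircPart.Preceq σ τ) : Refines τ σ := by
  rcases h with rfl | ⟨-, h⟩
  · exact refines_refl _
  · exact rtg_refines h

lemma exists_two_parts (σ : CircPart X) :
    ∃ P Q : Set X, P ∈ σ.parts ∧ Q ∈ σ.parts ∧ P ≠ Q := by
  obtain ⟨l, rfl⟩ := circPart_exists_rep σ
  obtain ⟨ls, hls⟩ := l
  match ls, hls with
  | P :: Q :: t, hls =>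
    have hPQ : P ≠ Q := fun h => (List.nodup_cons.mp hls.2.1).1 (h ▸ List.mem_cons_self (a := Q) (l := t))
    exact ⟨P, Q, mem_parts.mpr (by simp), mem_parts.mpr (by simp), hPQ⟩

lemma not_univ_part {σ : CircPart X} {P : Set X} (hP : P ∈ σ.parts)
    (hPuniv : P = Set.univ) : False := by
  obtain ⟨P₁, P₂, h1, h2, h12⟩ := exists_two_parts σ
  have e : ∀ R : Set X, R ∈ σ.parts → R = P := by
    intro R hR
    obtain ⟨x, hx⟩ := parts_nonempty hR
    exact parts_eq_of_inter hR hP ⟨x, hx, by rw [hPuniv]; trivial⟩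
  exact h12 ((e P₁ h1).trans (e P₂ h2).symm)

lemma isSplit_of_two (σ : CircPart X) (A B : Set X) (hAB : A ≠ B)
    (h : ∀ P ∈ σ.parts, P = A ∨ P = B) : σ.IsSplit := by
  classical
  obtain ⟨l, rfl⟩ := circPart_exists_rep σ
  refine ⟨l, rfl, ?_⟩
  have hsub : l.1.toFinset ⊆ {A, B} := by
    intro P hP
    rcases h P (mem_parts.mpr (List.mem_toFinset.mp hP)) with rfl | rfl <;> simp
  have hcard : l.1.toFinset.card ≤ 2 :=
    le_trans (Finset.card_le_card hsub) ((Finset.card_insert_le _ _).trans (by simp))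
  rw [List.toFinset_card_of_nodup l.2.2.1] at hcard
  exact le_antisymm hcard l.2.1

lemma preceq_unique {σ₁ σ₂ σ₂' : CircPart X}
    (h : σ₁.Preceq σ₂) (h' : σ₁.Preceq σ₂')
    (hcomp : σ₂.Compatible σ₂') (hne : σ₂ ≠ σ₂') : False := by
  have hns : ¬ σ₁.IsSplit := by
    rcases h with rfl | ⟨hns, -⟩
    · rcases h' with rfl | ⟨hns, -⟩
      · exact absurd rfl hne
      · exact hns
    · exact hns
  have hr : Refines σ₂ σ₁ := preceq_refines h
  have hr' : Refines σ₂' σ₁ := preceq_refines h'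
  obtain ⟨A, hA, B, hB, hAB⟩ := hcomp
  have hABne : A ≠ B := by
    rintro rfl
    exact not_univ_part hA (by rw [← hAB]; simp)
  apply hns
  refine isSplit_of_two σ₁ A B hABne ?_
  intro P hP
  by_cases hPA : (A ∩ P).Nonempty
  · left
    have hAP : A ⊆ P := hr P hP A hA hPA
    by_cases hPB : (B ∩ P).Nonempty
    · have hBP : B ⊆ P := hr' P hP B hB hPB
      have : P = Set.univ := Set.eq_univ_of_univ_subset (by rw [← hAB]; exact Set.union_subset hAP hBP)
      exact (not_univ_part hP this).elim
    · have hPA' : P ⊆ A := by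
        intro x hx
        have hxu : x ∈ A ∪ B := by rw [hAB]; trivial
        rcases hxu with hxA | hxB
        · exact hxA
        · exact absurd ⟨x, hxB, hx⟩ hPB
      exact Set.Subset.antisymm hPA' hAP
  · right
    have hPB : P ⊆ B := by
      intro x hx
      have hxu : x ∈ A ∪ B := by rw [hAB]; trivial
      rcases hxu with hxA | hxB
      · exact absurd ⟨x, hxA, hx⟩ hPA
      · exact hxB
    obtain ⟨x, hx⟩ := parts_nonempty hP
    exact Set.Subset.antisymm hPB (hr' P hP B hB ⟨x, hPB hx, hx⟩)

end Aux

end PhyloCactus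

open PhyloCactus

/-- If `C₂` is a nonempty compatible set of circular partitions, then each
`σ₁ ∈ C₁` lies below at most one member of `C₂`, and `C₁ ⊴ C₂` holds iff there
is a unique domination map from `C₁` to `C₂`. -/
theorem domination_map_unique
    (X : Type) [Fintype X] (hX : 2 ≤ Fintype.card X)
    (C₁ C₂ : Set (CircPart X)) (h₁ : C₁.Nonempty) (h₂ : C₂.Nonempty)
    (hc : CompatibleFamily C₂) :
    (∀ σ₁ ∈ C₁, ∀ σ₂ ∈ C₂, ∀ σ₂' ∈ C₂,
      σ₁.Preceq σ₂ → σ₁.Preceq σ₂' → σ₂ = σ₂') ∧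
    (Dominates C₁ C₂ ↔
      ∃ L, IsDominationMap C₁ C₂ L ∧
        ∀ L', IsDominationMap C₁ C₂ L' → Set.EqOn L' L C₁) := by
  have key : ∀ σ₁ ∈ C₁, ∀ σ₂ ∈ C₂, ∀ σ₂' ∈ C₂,
      σ₁.Preceq σ₂ → σ₁.Preceq σ₂' → σ₂ = σ₂' := by
    intro σ₁ _ σ₂ hσ₂ σ₂' hσ₂' hp hp'
    by_contra hne
    exact preceq_unique hp hp' (hc σ₂ hσ₂ σ₂' hσ₂' hne) hne
  refine ⟨key, ?_, ?_⟩
  · rintro ⟨L, hL⟩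
    refine ⟨L, hL, fun L' hL' σ hσ => ?_⟩
    exact key σ hσ (L' σ) (hL'.1 hσ) (L σ) (hL.1 hσ) (hL'.2.2 σ hσ) (hL.2.2 σ hσ)
  · rintro ⟨L, hL, -⟩
    exact ⟨L, hL⟩
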